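/- For positive integers n and k: if k is odd then F°_k(n) = b · Σ_{j=1}^{⌊n/k⌋} h°(n − jk), and if k is even then F°_k(n) = 0. -/

import Mathlib

/-- A colored partition of `n`, where the part `j` comes in `b j` colors, is a multiset of
pairs `(j, c)` with `j` a positive integer and `c ∈ {1, …, b j}`, whose weight (the sum of
the first coordinates, counted with multiplicity) is `n`. -/
def IsColoredPartition (b : ℕ → ℕ) (n : ℕ) (M : Multiset (ℕ × ℕ)) : Prop :=
  (∀ p ∈ M, 0 < p.1 ∧ 1 ≤ p.2 ∧ p.2 ≤ b p.1) ∧ (M.map Prod.fst).sum = n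

/-- A colored partition in which every part has odd first coordinate. -/
def IsColoredOddPartition (b : ℕ → ℕ) (n : ℕ) (M : Multiset (ℕ × ℕ)) : Prop :=
  IsColoredPartition b n M ∧ ∀ p ∈ M, Odd p.1

/-- `h° n`: the number of `b`-colored partitions of `n` with all parts odd. -/
noncomputable def coloredhOdd (b : ℕ → ℕ) (n : ℕ) : ℕ :=
  Nat.card {M // IsColoredOddPartition b n M}

/-- `F° k n`: the total number of parts with first coordinate `k`, counted with
multiplicity, over all `b`-colored odd partitions of `n`. -/
noncomputable def coloredFOdd (b : ℕ → ℕ) (k n : ℕ) : ℕ :=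
  ∑ᶠ M ∈ {M | IsColoredOddPartition b n M}, (Multiset.filter (fun p => p.1 = k) M).card

lemma aux_card_le_sum (s : Multiset ℕ) (h : ∀ x ∈ s, 1 ≤ x) : Multiset.card s ≤ s.sum := by
  induction s using Multiset.induction with
  | empty => simp
  | cons a s ih =>
    simp only [Multiset.card_cons, Multiset.sum_cons]
    have h1 : 1 ≤ a := h a (Multiset.mem_cons_self a s)
    have h2 := ih (fun x hx => h x (Multiset.mem_cons_of_mem hx))
    omega

lemma aux_card_le (b n : ℕ) {M : Multiset (ℕ × ℕ)}
    (h : IsColoredOddPartition (fun _ => b) n M) : Multiset.card M ≤ n := by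
  obtain ⟨⟨h1, h2⟩, _⟩ := h
  calc Multiset.card M = Multiset.card (M.map Prod.fst) := (Multiset.card_map _ _).symm
    _ ≤ (M.map Prod.fst).sum := by
        apply aux_card_le_sum
        intro x hx
        obtain ⟨p, hp, rfl⟩ := Multiset.mem_map.1 hx
        exact (h1 p hp).1
    _ = n := h2

lemma aux_finite (b n : ℕ) :
    {M : Multiset (ℕ × ℕ) | IsColoredOddPartition (fun _ => b) n M}.Finite := by
  classical
  apply Set.Finite.subset
    (Multiset.finite_toSet ((n • ((Finset.range (n+1)) ×ˢ (Finset.range (b+1))).val).powerset))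
  intro M hM
  simp only [Set.mem_setOf_eq] at hM ⊢
  rw [Multiset.mem_powerset, Multiset.le_iff_count]
  intro a
  by_cases haM : a ∈ M
  · have ha1 : a.1 ≤ n := by
      have := Multiset.single_le_sum (fun x _ => Nat.zero_le x) a.1
        (Multiset.mem_map_of_mem Prod.fst haM)
      rw [hM.1.2] at this; exact this
    have ha2 : a.2 ≤ b := (hM.1.1 a haM).2.2
    have hmem : a ∈ ((Finset.range (n+1)) ×ˢ (Finset.range (b+1))).val := by
      rw [Finset.mem_val, Finset.mem_product, Finset.mem_range, Finset.mem_range]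
      omega
    have hc1 : 1 ≤ Multiset.count a ((Finset.range (n+1)) ×ˢ (Finset.range (b+1))).val :=
      Multiset.one_le_count_iff_mem.2 hmem
    have hcM : Multiset.count a M ≤ n := le_trans (Multiset.count_le_card a M) (aux_card_le b n hM)
    rw [Multiset.count_nsmul]
    calc Multiset.count a M ≤ n := hcM
      _ ≤ n * Multiset.count a ((Finset.range (n+1)) ×ˢ (Finset.range (b+1))).val :=
        Nat.le_mul_of_pos_right n hc1
  · rw [Multiset.count_eq_zero_of_notMem haM]; exact Nat.zero_le _

lemma aux_filter_card (b k : ℕ) (M : Multiset (ℕ × ℕ)) (h : ∀ p ∈ M, 1 ≤ p.2 ∧ p.2 ≤ b) :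
    (Multiset.filter (fun p => p.1 = k) M).card
      = ∑ c ∈ Finset.Icc 1 b, Multiset.count (k, c) M := by
  classical
  induction M using Multiset.induction with
  | empty => simp
  | cons a s ih =>
    have ha := h a (Multiset.mem_cons_self a s)
    have ihs := ih (fun p hp => h p (Multiset.mem_cons_of_mem hp))
    have hcount : ∀ c, Multiset.count (k, c) (a ::ₘ s)
        = Multiset.count (k, c) s + (if (k, c) = a then 1 else 0) :=
      fun c => Multiset.count_cons (k, c) a s
    have hsum : ∑ c ∈ Finset.Icc 1 b, (if (k, c) = a then 1 else 0)
        = if a.1 = k then 1 else 0 := by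
      by_cases hak : a.1 = k
      · rw [if_pos hak, Finset.sum_eq_single a.2]
        · rw [if_pos]; exact Prod.ext_iff.2 ⟨hak.symm, rfl⟩
        · intro c hc hca
          rw [if_neg]
          intro hEq
          exact hca (congrArg Prod.snd hEq.symm).symm
        · intro h2
          exact absurd (Finset.mem_Icc.2 ⟨ha.1, ha.2⟩) h2
      · rw [if_neg hak]
        apply Finset.sum_eq_zero
        intro c hc
        rw [if_neg]
        intro hEq
        exact hak (congrArg Prod.fst hEq.symm)
    rw [Multiset.filter_cons]
    simp only [Finset.sum_congr rfl (fun c _ => hcount c), Finset.sum_add_distrib, ← ihs, hsum]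
    by_cases hak : a.1 = k
    · simp [hak]
    · simp [hak]

lemma aux_sum_indicator (t m : ℕ) (h : t ≤ m) :
    ∑ j ∈ Finset.Icc 1 m, (if j ≤ t then 1 else 0) = t := by
  have hfil : Finset.filter (fun j => j ≤ t) (Finset.Icc 1 m) = Finset.Icc 1 t := by
    ext j
    simp only [Finset.mem_filter, Finset.mem_Icc]
    omega
  rw [Finset.sum_ite, Finset.sum_const, Finset.sum_const, hfil]
  simp [Nat.card_Icc]

/-- The key bijection: partitions of `n` containing at least `j` copies of `(k,c)`
correspond to partitions of `n - j*k`. -/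
def auxEquiv (b n k c j : ℕ) (hk : 0 < k) (hkodd : Odd k)
    (hc1 : 1 ≤ c) (hcb : c ≤ b) (hjk : j * k ≤ n) :
    {M : Multiset (ℕ × ℕ) // IsColoredOddPartition (fun _ => b) n M ∧
        j ≤ Multiset.count (k, c) M} ≃
    {M : Multiset (ℕ × ℕ) // IsColoredOddPartition (fun _ => b) (n - j * k) M} where
  toFun := fun ⟨M, hM, hj⟩ => by
    refine ⟨M - Multiset.replicate j (k, c), ?_⟩
    have hsub : ∀ p ∈ M - Multiset.replicate j (k, c), p ∈ M := fun p hp =>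
      Multiset.mem_of_le (Multiset.sub_le_self _ _) hp
    have hle : Multiset.replicate j (k, c) ≤ M := Multiset.le_count_iff_replicate_le.1 hj
    refine ⟨⟨fun p hp => hM.1.1 p (hsub p hp), ?_⟩, fun p hp => hM.2 p (hsub p hp)⟩
    have key : ((M - Multiset.replicate j (k, c)).map Prod.fst).sum + j * k = n := by
      have heq : (M - Multiset.replicate j (k, c)) + Multiset.replicate j (k, c) = M :=
        tsub_add_cancel_of_le hle
      have h2 := congrArg (fun s => (Multiset.map Prod.fst s).sum) heq
      simp only [Multiset.map_add, Multiset.sum_add, Multiset.map_replicate,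
        Multiset.sum_replicate, smul_eq_mul] at h2
      rw [hM.1.2] at h2
      exact h2
    omega
  invFun := fun ⟨M, hM⟩ => by
    refine ⟨M + Multiset.replicate j (k, c), ⟨⟨?_, ?_⟩, ?_⟩, ?_⟩
    · intro p hp
      rcases Multiset.mem_add.1 hp with h | h
      · exact hM.1.1 p h
      · rw [Multiset.eq_of_mem_replicate h]; exact ⟨hk, hc1, hcb⟩
    · simp only [Multiset.map_add, Multiset.sum_add, Multiset.map_replicate,
        Multiset.sum_replicate, smul_eq_mul, hM.1.2]
      omega
    · intro p hp
      rcases Multiset.mem_add.1 hp with h | h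
      · exact hM.2 p h
      · rw [Multiset.eq_of_mem_replicate h]; exact hkodd
    · rw [Multiset.count_add, Multiset.count_replicate_self]; omega
  left_inv := fun ⟨M, hM, hj⟩ => by
    simp only [Subtype.mk.injEq]
    exact tsub_add_cancel_of_le (Multiset.le_count_iff_replicate_le.1 hj)
  right_inv := fun ⟨M, hM⟩ => by
    simp only [Subtype.mk.injEq]
    exact Subtype.ext (add_tsub_cancel_right M _)

/-- If `k` is odd then `F°_k(n) = b · Σ_{j=1}^{⌊n/k⌋} h°(n - jk)`; if `k` is even then
`F°_k(n) = 0`. -/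
theorem coloredFOdd_eq_sum (b : ℕ) (hb : 0 < b) (n k : ℕ) (hn : 0 < n) (hk : 0 < k) :
    (Odd k → coloredFOdd (fun _ => b) k n
        = b * ∑ j ∈ Finset.Icc 1 (n / k), coloredhOdd (fun _ => b) (n - j * k)) ∧
    (Even k → coloredFOdd (fun _ => b) k n = 0) := by
  classical
  have hfin := aux_finite b n
  have hFOdd : coloredFOdd (fun _ => b) k n
      = ∑ M ∈ hfin.toFinset, (Multiset.filter (fun p => p.1 = k) M).card :=
    finsum_mem_eq_finite_toFinset_sum _ hfin
  constructor
  · intro hkodd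
    rw [hFOdd]
    have step1 : ∀ M ∈ hfin.toFinset, (Multiset.filter (fun p => p.1 = k) M).card
        = ∑ c ∈ Finset.Icc 1 b, Multiset.count (k, c) M := by
      intro M hM
      rw [Set.Finite.mem_toFinset] at hM
      exact aux_filter_card b k M (fun p hp => (hM.1.1 p hp).2)
    rw [Finset.sum_congr rfl step1, Finset.sum_comm]
    have hcnt_le : ∀ M ∈ hfin.toFinset, ∀ c, Multiset.count (k, c) M ≤ n / k := by
      intro M hM c
      rw [Set.Finite.mem_toFinset] at hM
      rw [Nat.le_div_iff_mul_le hk]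
      have hle2 : Multiset.replicate (Multiset.count (k, c) M) (k, c) ≤ M :=
        Multiset.le_count_iff_replicate_le.1 le_rfl
      obtain ⟨u, hu⟩ := Multiset.le_iff_exists_add.1 hle2
      have h3 := congrArg (fun s => (Multiset.map Prod.fst s).sum) hu
      simp only [Multiset.map_add, Multiset.sum_add, Multiset.map_replicate,
        Multiset.sum_replicate, smul_eq_mul] at h3
      rw [hM.1.2] at h3
      omega
    have step2 : ∀ c ∈ Finset.Icc 1 b, ∑ M ∈ hfin.toFinset, Multiset.count (k, c) M
        = ∑ j ∈ Finset.Icc 1 (n / k), coloredhOdd (fun _ => b) (n - j * k) := by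
      intro c hc
      rw [Finset.mem_Icc] at hc
      have e1 : ∀ M ∈ hfin.toFinset, Multiset.count (k, c) M
          = ∑ j ∈ Finset.Icc 1 (n / k), (if j ≤ Multiset.count (k, c) M then 1 else 0) :=
        fun M hM => (aux_sum_indicator _ _ (hcnt_le M hM c)).symm
      rw [Finset.sum_congr rfl e1, Finset.sum_comm]
      apply Finset.sum_congr rfl
      intro j hj
      rw [Finset.mem_Icc] at hj
      have hjk : j * k ≤ n := (Nat.le_div_iff_mul_le hk).1 hj.2
      -- LHS = card of the filtered finset
      rw [Finset.sum_ite, Finset.sum_const, Finset.sum_const, smul_eq_mul, mul_one,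
        smul_eq_mul, mul_zero, add_zero]
      have hfin2 : {M : Multiset (ℕ × ℕ) | IsColoredOddPartition (fun _ => b) n M ∧
          j ≤ Multiset.count (k, c) M}.Finite :=
        hfin.subset (fun M hM => hM.1)
      have hcardeq : (Finset.filter (fun M => j ≤ Multiset.count (k, c) M) hfin.toFinset).card
          = hfin2.toFinset.card := by
        congr 1
        ext M
        simp only [Finset.mem_filter, Set.Finite.mem_toFinset, Set.mem_setOf_eq]
      rw [hcardeq, ← Set.ncard_eq_toFinset_card _ hfin2, ← Nat.card_coe_set_eq]
      exact Nat.card_congr (auxEquiv b n k c j hk hkodd hc.1 hc.2 hjk)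
    rw [Finset.sum_congr rfl step2, Finset.sum_const, Nat.card_Icc, smul_eq_mul]
    simp
  · intro hkeven
    rw [hFOdd]
    apply Finset.sum_eq_zero
    intro M hM
    rw [Set.Finite.mem_toFinset] at hM
    rw [Multiset.card_eq_zero, Multiset.filter_eq_nil]
    intro p hp hpk
    have := hM.2 p hp
    rw [hpk] at this
    exact (Nat.not_odd_iff_even.2 hkeven) this
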